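/- Let ℍ be the algebra of quaternions, fix v ∈ ℍ, and let (ℍ⊕ℍ, d, [·,·], J) be the quaternionic 2-term L∞-algebra with d = Re, brackets [a,c] = Im(Im(a)Im(c)) (on both L₀×L₀ and L₀×L₁), and J determined by J(1,i,j) = J(1,i,k) = J(1,j,k) = 0, J(i,j,k) = Im(v). Define φ : ℍ → ℍ (used in both degrees) as the real-linear map determined by φ(1) = 1, φ(i) = j, φ(j) = k, φ(k) = i, and define Φ : ℍ ∧ ℍ → ℍ as the real-linear alternating map determined by Φ(1∧i) = Φ(1∧j) = Φ(1∧k) = 0, Φ(i∧j) = Re(v(i−j))·k, Φ(j∧k) = Re(v(j−k))·i, Φ(k∧i) = Re(v(k−i))·j. Then (φ,Φ) is an isomorphism of 2-term L∞-algebras from (ℍ⊕ℍ, d, [·,·], J) to itself. -/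

import Mathlib

open Function

/-- The data `(d, b0, b1, J)` on the graded vector space `L0 ⊕ L1` forms a 2-term
L∞-algebra.  Here `b0` is the bracket `L0 × L0 → L0`, `b1` is the bracket
`L0 × L1 → L1` (with the convention `[v,x] := -[x,v] = - b1 x v` for `v : L1`, `x : L0`),
and `J` is the Jacobiator. -/
structure IsTwoTerm (k : Type*) [Field k]
    (L0 : Type*) [AddCommGroup L0] [Module k L0]
    (L1 : Type*) [AddCommGroup L1] [Module k L1]
    (d : L1 → L0) (b0 : L0 → L0 → L0) (b1 : L0 → L1 → L1)
    (J : L0 → L0 → L0 → L1) : Prop where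
  d_lin : IsLinearMap k d
  b0_lin_left : ∀ y, IsLinearMap k fun x => b0 x y
  b0_lin_right : ∀ x, IsLinearMap k fun y => b0 x y
  b0_antisymm : ∀ x y, b0 x y = - b0 y x
  b1_lin_left : ∀ v, IsLinearMap k fun x => b1 x v
  b1_lin_right : ∀ x, IsLinearMap k fun v => b1 x v
  J_lin₁ : ∀ y z, IsLinearMap k fun x => J x y z
  J_lin₂ : ∀ x z, IsLinearMap k fun y => J x y z
  J_lin₃ : ∀ x y, IsLinearMap k fun z => J x y z
  J_alt₁ : ∀ x z, J x x z = 0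
  J_alt₂ : ∀ x y, J x y y = 0
  ident₁ : ∀ x v, d (b1 x v) = b0 x (d v)
  ident₂ : ∀ u v, b1 (d u) v = - b1 (d v) u
  ident₃ : ∀ x y z, d (J x y z) = b0 x (b0 y z) - b0 (b0 x y) z - b0 y (b0 x z)
  ident₄ : ∀ v y z, J (d v) y z = - b1 (b0 y z) v - b1 z (b1 y v) + b1 y (b1 z v)
  ident₅ : ∀ x₁ x₂ x₃ x₄,
    b1 x₁ (J x₂ x₃ x₄) - b1 x₂ (J x₁ x₃ x₄) + b1 x₃ (J x₁ x₂ x₄) - b1 x₄ (J x₁ x₂ x₃)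
      - (J (b0 x₁ x₂) x₃ x₄ - J (b0 x₁ x₃) x₂ x₄ + J (b0 x₁ x₄) x₂ x₃
        + J (b0 x₂ x₃) x₁ x₄ - J (b0 x₂ x₄) x₁ x₃ + J (b0 x₃ x₄) x₁ x₂) = 0

/-- `(φ0, φ1, Φ)` is a morphism of 2-term L∞-algebras from `(L0 ⊕ L1, d, b0, b1, J)`
to `(M0 ⊕ M1, d', b0', b1', J')`.  `Φ` is a linear map on `L0 ∧ L0`, encoded as an
antisymmetric bilinear map. -/
structure IsMorphism (k : Type*) [Field k]
    (L0 : Type*) [AddCommGroup L0] [Module k L0]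
    (L1 : Type*) [AddCommGroup L1] [Module k L1]
    (M0 : Type*) [AddCommGroup M0] [Module k M0]
    (M1 : Type*) [AddCommGroup M1] [Module k M1]
    (d : L1 → L0) (b0 : L0 → L0 → L0) (b1 : L0 → L1 → L1) (J : L0 → L0 → L0 → L1)
    (d' : M1 → M0) (b0' : M0 → M0 → M0) (b1' : M0 → M1 → M1) (J' : M0 → M0 → M0 → M1)
    (φ0 : L0 → M0) (φ1 : L1 → M1) (Φ : L0 → L0 → M1) : Prop where
  φ0_lin : IsLinearMap k φ0
  φ1_lin : IsLinearMap k φ1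
  Φ_lin_left : ∀ y, IsLinearMap k fun x => Φ x y
  Φ_lin_right : ∀ x, IsLinearMap k fun y => Φ x y
  Φ_alt : ∀ x, Φ x x = 0
  compat_d : ∀ v, φ0 (d v) = d' (φ1 v)
  compat_b0 : ∀ x y, d' (Φ x y) = φ0 (b0 x y) - b0' (φ0 x) (φ0 y)
  compat_b1 : ∀ v y, Φ (d v) y = - φ1 (b1 y v) + b1' (φ0 y) (φ1 v)
  compat_J : ∀ x₁ x₂ x₃,
    φ1 (J x₁ x₂ x₃) - J' (φ0 x₁) (φ0 x₂) (φ0 x₃)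
      = b1' (φ0 x₁) (Φ x₂ x₃) - b1' (φ0 x₂) (Φ x₁ x₃) + b1' (φ0 x₃) (Φ x₁ x₂)
        + Φ x₁ (b0 x₂ x₃) - Φ x₂ (b0 x₁ x₃) + Φ x₃ (b0 x₁ x₂)

/-- The real part of a quaternion, viewed as a quaternion. -/
noncomputable def qRe (z : Quaternion ℝ) : Quaternion ℝ := ((z.re : ℝ) : Quaternion ℝ)

/-- The imaginary part of a quaternion: `Im(z) := z - Re(z)`. -/
noncomputable def qIm (z : Quaternion ℝ) : Quaternion ℝ := z - qRe z

/-- The bracket `[a,c] := Im(Im(a)·Im(c))` of the quaternionic 2-term L∞-algebra. -/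
noncomputable def qBr (a c : Quaternion ℝ) : Quaternion ℝ := qIm (qIm a * qIm c)

/-- The imaginary units of `ℍ`. -/
noncomputable def qI : Quaternion ℝ := ⟨0, 1, 0, 0⟩
noncomputable def qJ : Quaternion ℝ := ⟨0, 0, 1, 0⟩
noncomputable def qK : Quaternion ℝ := ⟨0, 0, 0, 1⟩

@[simp] lemma qI_re : qI.re = 0 := rfl
@[simp] lemma qI_imI : qI.imI = 1 := rfl
@[simp] lemma qI_imJ : qI.imJ = 0 := rfl
@[simp] lemma qI_imK : qI.imK = 0 := rfl
@[simp] lemma qJ_re : qJ.re = 0 := rfl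
@[simp] lemma qJ_imI : qJ.imI = 0 := rfl
@[simp] lemma qJ_imJ : qJ.imJ = 1 := rfl
@[simp] lemma qJ_imK : qJ.imK = 0 := rfl
@[simp] lemma qK_re : qK.re = 0 := rfl
@[simp] lemma qK_imI : qK.imI = 0 := rfl
@[simp] lemma qK_imJ : qK.imJ = 0 := rfl
@[simp] lemma qK_imK : qK.imK = 1 := rfl

attribute [simp] Quaternion.re_one Quaternion.imI_one Quaternion.imJ_one Quaternion.imK_one
attribute [simp] Quaternion.re_zero Quaternion.imI_zero Quaternion.imJ_zero Quaternion.imK_zero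

lemma qdecomp (x : Quaternion ℝ) :
    x = x.re • (1 : Quaternion ℝ) + x.imI • qI + x.imJ • qJ + x.imK • qK := by
  ext <;> simp

lemma qexpand {f : Quaternion ℝ → Quaternion ℝ} (hf : IsLinearMap ℝ f) (x : Quaternion ℝ) :
    f x = x.re • f 1 + x.imI • f qI + x.imJ • f qJ + x.imK • f qK := by
  conv_lhs => rw [qdecomp x]
  rw [hf.map_add, hf.map_add, hf.map_add, hf.map_smul, hf.map_smul, hf.map_smul, hf.map_smul]

set_option maxHeartbeats 2000000 in
/-- Example 5 of the paper: on the quaternionic 2-term L∞-algebra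
`ℍ ⊕ ℍ` (with `d = Re`, brackets `[a,c] = Im(Im(a)·Im(c))` in both degrees, and `J`
the alternating trilinear map with `J(1,i,j) = J(1,i,k) = J(1,j,k) = 0`,
`J(i,j,k) = Im(v)`), the pair `(φ, Φ)`, where `φ` is the real-linear map (used in both
degrees) with `φ(1) = 1, φ(i) = j, φ(j) = k, φ(k) = i`, and `Φ` is the antisymmetric
bilinear map with `Φ(1,i) = Φ(1,j) = Φ(1,k) = 0`, `Φ(i,j) = Re(v(i−j))·k`,
`Φ(j,k) = Re(v(j−k))·i`, `Φ(k,i) = Re(v(k−i))·j`, is an isomorphism of 2-term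
L∞-algebras from `ℍ ⊕ ℍ` to itself. -/
theorem stmt15 (v : Quaternion ℝ)
    (J : Quaternion ℝ → Quaternion ℝ → Quaternion ℝ → Quaternion ℝ)
    (hJ_lin₁ : ∀ y z, IsLinearMap ℝ fun x => J x y z)
    (hJ_lin₂ : ∀ x z, IsLinearMap ℝ fun y => J x y z)
    (hJ_lin₃ : ∀ x y, IsLinearMap ℝ fun z => J x y z)
    (hJ_alt₁ : ∀ x z, J x x z = 0)
    (hJ_alt₂ : ∀ x y, J x y y = 0)
    (hJ1ij : J 1 qI qJ = 0)
    (hJ1ik : J 1 qI qK = 0)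
    (hJ1jk : J 1 qJ qK = 0)
    (hJijk : J qI qJ qK = qIm v)
    (φ : Quaternion ℝ → Quaternion ℝ)
    (hφ_lin : IsLinearMap ℝ φ)
    (hφ1 : φ 1 = 1)
    (hφi : φ qI = qJ)
    (hφj : φ qJ = qK)
    (hφk : φ qK = qI)
    (Φ : Quaternion ℝ → Quaternion ℝ → Quaternion ℝ)
    (hΦ_lin_left : ∀ y, IsLinearMap ℝ fun x => Φ x y)
    (hΦ_lin_right : ∀ x, IsLinearMap ℝ fun y => Φ x y)
    (hΦ_alt : ∀ x, Φ x x = 0)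
    (hΦ1i : Φ 1 qI = 0)
    (hΦ1j : Φ 1 qJ = 0)
    (hΦ1k : Φ 1 qK = 0)
    (hΦij : Φ qI qJ = ((v * (qI - qJ)).re : ℝ) • qK)
    (hΦjk : Φ qJ qK = ((v * (qJ - qK)).re : ℝ) • qI)
    (hΦki : Φ qK qI = ((v * (qK - qI)).re : ℝ) • qJ) :
    IsMorphism ℝ (Quaternion ℝ) (Quaternion ℝ) (Quaternion ℝ) (Quaternion ℝ)
      qRe qBr qBr J qRe qBr qBr J φ φ Φ ∧
    Function.Bijective φ := by
  
  -- abbreviations for linearity expansions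
  have addJ1 : ∀ x x' y z, J (x + x') y z = J x y z + J x' y z :=
    fun x x' y z => (hJ_lin₁ y z).map_add x x'
  have addJ2 : ∀ x y y' z, J x (y + y') z = J x y z + J x y' z :=
    fun x y y' z => (hJ_lin₂ x z).map_add y y'
  have addJ3 : ∀ x y z z', J x y (z + z') = J x y z + J x y z' :=
    fun x y z z' => (hJ_lin₃ x y).map_add z z'
  have addPl : ∀ x x' y, Φ (x + x') y = Φ x y + Φ x' y :=
    fun x x' y => (hΦ_lin_left y).map_add x x'
  have addPr : ∀ x y y', Φ x (y + y') = Φ x y + Φ x y' :=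
    fun x y y' => (hΦ_lin_right x).map_add y y'
  have JA12 : ∀ x y z, J x y z = - J y x z := by
    intro x y z
    have h := hJ_alt₁ (x + y) z
    rw [addJ1 x y (x + y) z, addJ2 x x y z, addJ2 y x y z, hJ_alt₁ x z, hJ_alt₁ y z,
      zero_add, add_zero] at h
    exact add_eq_zero_iff_eq_neg.mp h
  have JA23 : ∀ x y z, J x y z = - J x z y := by
    intro x y z
    have h := hJ_alt₂ x (y + z)
    rw [addJ2 x y z (y + z), addJ3 x y y z, addJ3 x z y z, hJ_alt₂ x y, hJ_alt₂ x z,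
      zero_add, add_zero] at h
    exact add_eq_zero_iff_eq_neg.mp h
  have ΦA : ∀ x y, Φ x y = - Φ y x := by
    intro x y
    have h := hΦ_alt (x + y)
    rw [addPl x y (x + y), addPr x x y, addPr y x y, hΦ_alt x, hΦ_alt y,
      zero_add, add_zero] at h
    exact add_eq_zero_iff_eq_neg.mp h
  have tJ_0_0_0 : J 1 1 1 = (0 : Quaternion ℝ) := by simp [hJ_alt₁, hJ_alt₂, hJ1ij, hJ1ik, hJ1jk, hJijk]
  have tJ_0_0_1 : J 1 1 qI = (0 : Quaternion ℝ) := by simp [hJ_alt₁, hJ_alt₂, hJ1ij, hJ1ik, hJ1jk, hJijk]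
  have tJ_0_0_2 : J 1 1 qJ = (0 : Quaternion ℝ) := by simp [hJ_alt₁, hJ_alt₂, hJ1ij, hJ1ik, hJ1jk, hJijk]
  have tJ_0_0_3 : J 1 1 qK = (0 : Quaternion ℝ) := by simp [hJ_alt₁, hJ_alt₂, hJ1ij, hJ1ik, hJ1jk, hJijk]
  have tJ_0_1_0 : J 1 qI 1 = (0 : Quaternion ℝ) := by rw [JA23 1 qI 1]; simp [hJ_alt₁, hJ_alt₂, hJ1ij, hJ1ik, hJ1jk, hJijk]
  have tJ_0_1_1 : J 1 qI qI = (0 : Quaternion ℝ) := by simp [hJ_alt₁, hJ_alt₂, hJ1ij, hJ1ik, hJ1jk, hJijk]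
  have tJ_0_1_2 : J 1 qI qJ = (0 : Quaternion ℝ) := by simp [hJ_alt₁, hJ_alt₂, hJ1ij, hJ1ik, hJ1jk, hJijk]
  have tJ_0_1_3 : J 1 qI qK = (0 : Quaternion ℝ) := by simp [hJ_alt₁, hJ_alt₂, hJ1ij, hJ1ik, hJ1jk, hJijk]
  have tJ_0_2_0 : J 1 qJ 1 = (0 : Quaternion ℝ) := by rw [JA23 1 qJ 1]; simp [hJ_alt₁, hJ_alt₂, hJ1ij, hJ1ik, hJ1jk, hJijk]
  have tJ_0_2_1 : J 1 qJ qI = (0 : Quaternion ℝ) := by rw [JA23 1 qJ qI]; simp [hJ_alt₁, hJ_alt₂, hJ1ij, hJ1ik, hJ1jk, hJijk]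
  have tJ_0_2_2 : J 1 qJ qJ = (0 : Quaternion ℝ) := by simp [hJ_alt₁, hJ_alt₂, hJ1ij, hJ1ik, hJ1jk, hJijk]
  have tJ_0_2_3 : J 1 qJ qK = (0 : Quaternion ℝ) := by simp [hJ_alt₁, hJ_alt₂, hJ1ij, hJ1ik, hJ1jk, hJijk]
  have tJ_0_3_0 : J 1 qK 1 = (0 : Quaternion ℝ) := by rw [JA23 1 qK 1]; simp [hJ_alt₁, hJ_alt₂, hJ1ij, hJ1ik, hJ1jk, hJijk]
  have tJ_0_3_1 : J 1 qK qI = (0 : Quaternion ℝ) := by rw [JA23 1 qK qI]; simp [hJ_alt₁, hJ_alt₂, hJ1ij, hJ1ik, hJ1jk, hJijk]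
  have tJ_0_3_2 : J 1 qK qJ = (0 : Quaternion ℝ) := by rw [JA23 1 qK qJ]; simp [hJ_alt₁, hJ_alt₂, hJ1ij, hJ1ik, hJ1jk, hJijk]
  have tJ_0_3_3 : J 1 qK qK = (0 : Quaternion ℝ) := by simp [hJ_alt₁, hJ_alt₂, hJ1ij, hJ1ik, hJ1jk, hJijk]
  have tJ_1_0_0 : J qI 1 1 = (0 : Quaternion ℝ) := by rw [JA12 qI 1 1, JA23 1 qI 1]; simp [hJ_alt₁, hJ_alt₂, hJ1ij, hJ1ik, hJ1jk, hJijk]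
  have tJ_1_0_1 : J qI 1 qI = (0 : Quaternion ℝ) := by rw [JA12 qI 1 qI]; simp [hJ_alt₁, hJ_alt₂, hJ1ij, hJ1ik, hJ1jk, hJijk]
  have tJ_1_0_2 : J qI 1 qJ = (0 : Quaternion ℝ) := by rw [JA12 qI 1 qJ]; simp [hJ_alt₁, hJ_alt₂, hJ1ij, hJ1ik, hJ1jk, hJijk]
  have tJ_1_0_3 : J qI 1 qK = (0 : Quaternion ℝ) := by rw [JA12 qI 1 qK]; simp [hJ_alt₁, hJ_alt₂, hJ1ij, hJ1ik, hJ1jk, hJijk]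
  have tJ_1_1_0 : J qI qI 1 = (0 : Quaternion ℝ) := by rw [JA23 qI qI 1, JA12 qI 1 qI]; simp [hJ_alt₁, hJ_alt₂, hJ1ij, hJ1ik, hJ1jk, hJijk]
  have tJ_1_1_1 : J qI qI qI = (0 : Quaternion ℝ) := by simp [hJ_alt₁, hJ_alt₂, hJ1ij, hJ1ik, hJ1jk, hJijk]
  have tJ_1_1_2 : J qI qI qJ = (0 : Quaternion ℝ) := by simp [hJ_alt₁, hJ_alt₂, hJ1ij, hJ1ik, hJ1jk, hJijk]
  have tJ_1_1_3 : J qI qI qK = (0 : Quaternion ℝ) := by simp [hJ_alt₁, hJ_alt₂, hJ1ij, hJ1ik, hJ1jk, hJijk]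
  have tJ_1_2_0 : J qI qJ 1 = (0 : Quaternion ℝ) := by rw [JA23 qI qJ 1, JA12 qI 1 qJ]; simp [hJ_alt₁, hJ_alt₂, hJ1ij, hJ1ik, hJ1jk, hJijk]
  have tJ_1_2_1 : J qI qJ qI = (0 : Quaternion ℝ) := by rw [JA23 qI qJ qI]; simp [hJ_alt₁, hJ_alt₂, hJ1ij, hJ1ik, hJ1jk, hJijk]
  have tJ_1_2_2 : J qI qJ qJ = (0 : Quaternion ℝ) := by simp [hJ_alt₁, hJ_alt₂, hJ1ij, hJ1ik, hJ1jk, hJijk]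
  have tJ_1_2_3 : J qI qJ qK = qIm v := by simp [hJ_alt₁, hJ_alt₂, hJ1ij, hJ1ik, hJ1jk, hJijk]
  have tJ_1_3_0 : J qI qK 1 = (0 : Quaternion ℝ) := by rw [JA23 qI qK 1, JA12 qI 1 qK]; simp [hJ_alt₁, hJ_alt₂, hJ1ij, hJ1ik, hJ1jk, hJijk]
  have tJ_1_3_1 : J qI qK qI = (0 : Quaternion ℝ) := by rw [JA23 qI qK qI]; simp [hJ_alt₁, hJ_alt₂, hJ1ij, hJ1ik, hJ1jk, hJijk]
  have tJ_1_3_2 : J qI qK qJ = -qIm v := by rw [JA23 qI qK qJ]; simp [hJ_alt₁, hJ_alt₂, hJ1ij, hJ1ik, hJ1jk, hJijk]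
  have tJ_1_3_3 : J qI qK qK = (0 : Quaternion ℝ) := by simp [hJ_alt₁, hJ_alt₂, hJ1ij, hJ1ik, hJ1jk, hJijk]
  have tJ_2_0_0 : J qJ 1 1 = (0 : Quaternion ℝ) := by rw [JA12 qJ 1 1, JA23 1 qJ 1]; simp [hJ_alt₁, hJ_alt₂, hJ1ij, hJ1ik, hJ1jk, hJijk]
  have tJ_2_0_1 : J qJ 1 qI = (0 : Quaternion ℝ) := by rw [JA12 qJ 1 qI, JA23 1 qJ qI]; simp [hJ_alt₁, hJ_alt₂, hJ1ij, hJ1ik, hJ1jk, hJijk]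
  have tJ_2_0_2 : J qJ 1 qJ = (0 : Quaternion ℝ) := by rw [JA12 qJ 1 qJ]; simp [hJ_alt₁, hJ_alt₂, hJ1ij, hJ1ik, hJ1jk, hJijk]
  have tJ_2_0_3 : J qJ 1 qK = (0 : Quaternion ℝ) := by rw [JA12 qJ 1 qK]; simp [hJ_alt₁, hJ_alt₂, hJ1ij, hJ1ik, hJ1jk, hJijk]
  have tJ_2_1_0 : J qJ qI 1 = (0 : Quaternion ℝ) := by rw [JA12 qJ qI 1, JA23 qI qJ 1, JA12 qI 1 qJ]; simp [hJ_alt₁, hJ_alt₂, hJ1ij, hJ1ik, hJ1jk, hJijk]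
  have tJ_2_1_1 : J qJ qI qI = (0 : Quaternion ℝ) := by rw [JA12 qJ qI qI, JA23 qI qJ qI]; simp [hJ_alt₁, hJ_alt₂, hJ1ij, hJ1ik, hJ1jk, hJijk]
  have tJ_2_1_2 : J qJ qI qJ = (0 : Quaternion ℝ) := by rw [JA12 qJ qI qJ]; simp [hJ_alt₁, hJ_alt₂, hJ1ij, hJ1ik, hJ1jk, hJijk]
  have tJ_2_1_3 : J qJ qI qK = -qIm v := by rw [JA12 qJ qI qK]; simp [hJ_alt₁, hJ_alt₂, hJ1ij, hJ1ik, hJ1jk, hJijk]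
  have tJ_2_2_0 : J qJ qJ 1 = (0 : Quaternion ℝ) := by rw [JA23 qJ qJ 1, JA12 qJ 1 qJ]; simp [hJ_alt₁, hJ_alt₂, hJ1ij, hJ1ik, hJ1jk, hJijk]
  have tJ_2_2_1 : J qJ qJ qI = (0 : Quaternion ℝ) := by rw [JA23 qJ qJ qI, JA12 qJ qI qJ]; simp [hJ_alt₁, hJ_alt₂, hJ1ij, hJ1ik, hJ1jk, hJijk]
  have tJ_2_2_2 : J qJ qJ qJ = (0 : Quaternion ℝ) := by simp [hJ_alt₁, hJ_alt₂, hJ1ij, hJ1ik, hJ1jk, hJijk]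
  have tJ_2_2_3 : J qJ qJ qK = (0 : Quaternion ℝ) := by simp [hJ_alt₁, hJ_alt₂, hJ1ij, hJ1ik, hJ1jk, hJijk]
  have tJ_2_3_0 : J qJ qK 1 = (0 : Quaternion ℝ) := by rw [JA23 qJ qK 1, JA12 qJ 1 qK]; simp [hJ_alt₁, hJ_alt₂, hJ1ij, hJ1ik, hJ1jk, hJijk]
  have tJ_2_3_1 : J qJ qK qI = qIm v := by rw [JA23 qJ qK qI, JA12 qJ qI qK]; simp [hJ_alt₁, hJ_alt₂, hJ1ij, hJ1ik, hJ1jk, hJijk]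
  have tJ_2_3_2 : J qJ qK qJ = (0 : Quaternion ℝ) := by rw [JA23 qJ qK qJ]; simp [hJ_alt₁, hJ_alt₂, hJ1ij, hJ1ik, hJ1jk, hJijk]
  have tJ_2_3_3 : J qJ qK qK = (0 : Quaternion ℝ) := by simp [hJ_alt₁, hJ_alt₂, hJ1ij, hJ1ik, hJ1jk, hJijk]
  have tJ_3_0_0 : J qK 1 1 = (0 : Quaternion ℝ) := by rw [JA12 qK 1 1, JA23 1 qK 1]; simp [hJ_alt₁, hJ_alt₂, hJ1ij, hJ1ik, hJ1jk, hJijk]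
  have tJ_3_0_1 : J qK 1 qI = (0 : Quaternion ℝ) := by rw [JA12 qK 1 qI, JA23 1 qK qI]; simp [hJ_alt₁, hJ_alt₂, hJ1ij, hJ1ik, hJ1jk, hJijk]
  have tJ_3_0_2 : J qK 1 qJ = (0 : Quaternion ℝ) := by rw [JA12 qK 1 qJ, JA23 1 qK qJ]; simp [hJ_alt₁, hJ_alt₂, hJ1ij, hJ1ik, hJ1jk, hJijk]
  have tJ_3_0_3 : J qK 1 qK = (0 : Quaternion ℝ) := by rw [JA12 qK 1 qK]; simp [hJ_alt₁, hJ_alt₂, hJ1ij, hJ1ik, hJ1jk, hJijk]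
  have tJ_3_1_0 : J qK qI 1 = (0 : Quaternion ℝ) := by rw [JA12 qK qI 1, JA23 qI qK 1, JA12 qI 1 qK]; simp [hJ_alt₁, hJ_alt₂, hJ1ij, hJ1ik, hJ1jk, hJijk]
  have tJ_3_1_1 : J qK qI qI = (0 : Quaternion ℝ) := by rw [JA12 qK qI qI, JA23 qI qK qI]; simp [hJ_alt₁, hJ_alt₂, hJ1ij, hJ1ik, hJ1jk, hJijk]
  have tJ_3_1_2 : J qK qI qJ = qIm v := by rw [JA12 qK qI qJ, JA23 qI qK qJ]; simp [hJ_alt₁, hJ_alt₂, hJ1ij, hJ1ik, hJ1jk, hJijk]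
  have tJ_3_1_3 : J qK qI qK = (0 : Quaternion ℝ) := by rw [JA12 qK qI qK]; simp [hJ_alt₁, hJ_alt₂, hJ1ij, hJ1ik, hJ1jk, hJijk]
  have tJ_3_2_0 : J qK qJ 1 = (0 : Quaternion ℝ) := by rw [JA12 qK qJ 1, JA23 qJ qK 1, JA12 qJ 1 qK]; simp [hJ_alt₁, hJ_alt₂, hJ1ij, hJ1ik, hJ1jk, hJijk]
  have tJ_3_2_1 : J qK qJ qI = -qIm v := by rw [JA12 qK qJ qI, JA23 qJ qK qI, JA12 qJ qI qK]; simp [hJ_alt₁, hJ_alt₂, hJ1ij, hJ1ik, hJ1jk, hJijk]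
  have tJ_3_2_2 : J qK qJ qJ = (0 : Quaternion ℝ) := by rw [JA12 qK qJ qJ, JA23 qJ qK qJ]; simp [hJ_alt₁, hJ_alt₂, hJ1ij, hJ1ik, hJ1jk, hJijk]
  have tJ_3_2_3 : J qK qJ qK = (0 : Quaternion ℝ) := by rw [JA12 qK qJ qK]; simp [hJ_alt₁, hJ_alt₂, hJ1ij, hJ1ik, hJ1jk, hJijk]
  have tJ_3_3_0 : J qK qK 1 = (0 : Quaternion ℝ) := by rw [JA23 qK qK 1, JA12 qK 1 qK]; simp [hJ_alt₁, hJ_alt₂, hJ1ij, hJ1ik, hJ1jk, hJijk]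
  have tJ_3_3_1 : J qK qK qI = (0 : Quaternion ℝ) := by rw [JA23 qK qK qI, JA12 qK qI qK]; simp [hJ_alt₁, hJ_alt₂, hJ1ij, hJ1ik, hJ1jk, hJijk]
  have tJ_3_3_2 : J qK qK qJ = (0 : Quaternion ℝ) := by rw [JA23 qK qK qJ, JA12 qK qJ qK]; simp [hJ_alt₁, hJ_alt₂, hJ1ij, hJ1ik, hJ1jk, hJijk]
  have tJ_3_3_3 : J qK qK qK = (0 : Quaternion ℝ) := by simp [hJ_alt₁, hJ_alt₂, hJ1ij, hJ1ik, hJ1jk, hJijk]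
  have tP_0_0 : Φ 1 1 = (0 : Quaternion ℝ) := hΦ_alt _
  have tP_0_1 : Φ 1 qI = (0 : Quaternion ℝ) := hΦ1i
  have tP_0_2 : Φ 1 qJ = (0 : Quaternion ℝ) := hΦ1j
  have tP_0_3 : Φ 1 qK = (0 : Quaternion ℝ) := hΦ1k
  have tP_1_0 : Φ qI 1 = (0 : Quaternion ℝ) := by rw [ΦA qI 1, hΦ1i] <;> simp
  have tP_1_1 : Φ qI qI = (0 : Quaternion ℝ) := hΦ_alt _
  have tP_1_2 : Φ qI qJ = ((v * (qI - qJ)).re : ℝ) • qK := hΦij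
  have tP_1_3 : Φ qI qK = -(((v * (qK - qI)).re : ℝ) • qJ) := by rw [ΦA qI qK, hΦki] <;> simp
  have tP_2_0 : Φ qJ 1 = (0 : Quaternion ℝ) := by rw [ΦA qJ 1, hΦ1j] <;> simp
  have tP_2_1 : Φ qJ qI = -(((v * (qI - qJ)).re : ℝ) • qK) := by rw [ΦA qJ qI, hΦij] <;> simp
  have tP_2_2 : Φ qJ qJ = (0 : Quaternion ℝ) := hΦ_alt _
  have tP_2_3 : Φ qJ qK = ((v * (qJ - qK)).re : ℝ) • qI := hΦjk
  have tP_3_0 : Φ qK 1 = (0 : Quaternion ℝ) := by rw [ΦA qK 1, hΦ1k] <;> simp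
  have tP_3_1 : Φ qK qI = ((v * (qK - qI)).re : ℝ) • qJ := hΦki
  have tP_3_2 : Φ qK qJ = -(((v * (qJ - qK)).re : ℝ) • qI) := by rw [ΦA qK qJ, hΦjk] <;> simp
  have tP_3_3 : Φ qK qK = (0 : Quaternion ℝ) := hΦ_alt _
  have expJ₁ : ∀ x y z, J x y z = x.re • J 1 y z + x.imI • J qI y z + x.imJ • J qJ y z
      + x.imK • J qK y z := fun x y z => qexpand (hJ_lin₁ y z) x
  have expJ₂ : ∀ x y z, J x y z = y.re • J x 1 z + y.imI • J x qI z + y.imJ • J x qJ z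
      + y.imK • J x qK z := fun x y z => qexpand (hJ_lin₂ x z) y
  have expJ₃ : ∀ x y z, J x y z = z.re • J x y 1 + z.imI • J x y qI + z.imJ • J x y qJ
      + z.imK • J x y qK := fun x y z => qexpand (hJ_lin₃ x y) z
  have expPl : ∀ x y, Φ x y = x.re • Φ 1 y + x.imI • Φ qI y + x.imJ • Φ qJ y
      + x.imK • Φ qK y := fun x y => qexpand (hΦ_lin_left y) x
  have expPr : ∀ x y, Φ x y = y.re • Φ x 1 + y.imI • Φ x qI + y.imJ • Φ x qJ
      + y.imK • Φ x qK := fun x y => qexpand (hΦ_lin_right x) y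
  have expφ : ∀ w, φ w = w.re • (1 : Quaternion ℝ) + w.imI • qJ + w.imJ • qK + w.imK • qI := by
    intro w
    rw [qexpand hφ_lin w, hφ1, hφi, hφj, hφk]
  have Jform : ∀ x y z, J x y z =
      (x.imI * (y.imJ * z.imK - y.imK * z.imJ) - x.imJ * (y.imI * z.imK - y.imK * z.imI)
        + x.imK * (y.imI * z.imJ - y.imJ * z.imI)) • qIm v := by
    intro x y z
    rw [expJ₁ x y z, expJ₂ 1 y z, expJ₂ qI y z, expJ₂ qJ y z, expJ₂ qK y z,
      expJ₃ 1 1 z,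
      expJ₃ 1 qI z,
      expJ₃ 1 qJ z,
      expJ₃ 1 qK z,
      expJ₃ qI 1 z,
      expJ₃ qI qI z,
      expJ₃ qI qJ z,
      expJ₃ qI qK z,
      expJ₃ qJ 1 z,
      expJ₃ qJ qI z,
      expJ₃ qJ qJ z,
      expJ₃ qJ qK z,
      expJ₃ qK 1 z,
      expJ₃ qK qI z,
      expJ₃ qK qJ z,
      expJ₃ qK qK z]
    simp only [tJ_0_0_0, tJ_0_0_1, tJ_0_0_2, tJ_0_0_3, tJ_0_1_0, tJ_0_1_1, tJ_0_1_2, tJ_0_1_3, tJ_0_2_0, tJ_0_2_1, tJ_0_2_2, tJ_0_2_3, tJ_0_3_0, tJ_0_3_1, tJ_0_3_2, tJ_0_3_3, tJ_1_0_0, tJ_1_0_1, tJ_1_0_2, tJ_1_0_3, tJ_1_1_0, tJ_1_1_1, tJ_1_1_2, tJ_1_1_3, tJ_1_2_0, tJ_1_2_1, tJ_1_2_2, tJ_1_2_3, tJ_1_3_0, tJ_1_3_1, tJ_1_3_2, tJ_1_3_3, tJ_2_0_0, tJ_2_0_1, tJ_2_0_2, tJ_2_0_3, tJ_2_1_0,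 tJ_2_1_1, tJ_2_1_2, tJ_2_1_3, tJ_2_2_0, tJ_2_2_1, tJ_2_2_2, tJ_2_2_3, tJ_2_3_0, tJ_2_3_1, tJ_2_3_2, tJ_2_3_3, tJ_3_0_0, tJ_3_0_1, tJ_3_0_2, tJ_3_0_3, tJ_3_1_0, tJ_3_1_1, tJ_3_1_2, tJ_3_1_3, tJ_3_2_0, tJ_3_2_1, tJ_3_2_2, tJ_3_2_3, tJ_3_3_0, tJ_3_3_1, tJ_3_3_2, tJ_3_3_3]
    ext <;> simp [qIm, qRe] <;> ring
  have Φform : ∀ x y, Φ x y =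
      ((x.imI * y.imJ - x.imJ * y.imI) * (v * (qI - qJ)).re) • qK
      + ((x.imJ * y.imK - x.imK * y.imJ) * (v * (qJ - qK)).re) • qI
      + ((x.imK * y.imI - x.imI * y.imK) * (v * (qK - qI)).re) • qJ := by
    intro x y
    rw [expPl x y, expPr 1 y, expPr qI y, expPr qJ y, expPr qK y]
    simp only [tP_0_0, tP_0_1, tP_0_2, tP_0_3, tP_1_0, tP_1_1, tP_1_2, tP_1_3, tP_2_0, tP_2_1, tP_2_2, tP_2_3, tP_3_0, tP_3_1, tP_3_2, tP_3_3]
    ext <;> simp [qIm, qRe, Quaternion.re_mul] <;> ring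
  have hbij : Function.Bijective φ := by
    have h3 : ∀ x, φ (φ (φ x)) = x := by
      intro x
      simp only [expφ]
      ext <;> simp <;> ring
    exact ⟨Function.LeftInverse.injective (g := fun x => φ (φ x)) h3,
      fun x => ⟨φ (φ x), h3 x⟩⟩
  refine ⟨⟨hφ_lin, hφ_lin, hΦ_lin_left, hΦ_lin_right, hΦ_alt, ?_, ?_, ?_, ?_⟩, hbij⟩
  · intro u
    simp only [expφ, qRe]
    ext <;> simp <;> ring
  · intro x y
    simp only [Φform, expφ, qBr, qIm, qRe]
    ext <;> simp [Quaternion.re_mul, Quaternion.imI_mul, Quaternion.imJ_mul,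
      Quaternion.imK_mul] <;> ring
  · intro u y
    simp only [Φform, expφ, qBr, qIm, qRe]
    ext <;> simp [Quaternion.re_mul, Quaternion.imI_mul, Quaternion.imJ_mul,
      Quaternion.imK_mul] <;> ring
  · intro x y z
    simp only [Jform, Φform, expφ, qBr, qIm, qRe]
    ext <;> simp [Quaternion.re_mul, Quaternion.imI_mul, Quaternion.imJ_mul,
      Quaternion.imK_mul] <;> ring
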